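/- Let d ≥ 2 and let X ⊆ 𝕋 be a nonempty compact set with m_d(X) = X. Then X is a rotation set for m_d (i.e. m_d|_X extends to a monotone degree-1 circle map) if and only if the complement 𝕋∖X contains d−1 pairwise disjoint open arcs, each of length 1/d. -/

import Mathlib

open Set MeasureTheory ENNReal

noncomputable section

instance : Fact ((0:ℝ) < 1) := ⟨one_pos⟩

/-- The circle `ℝ/ℤ`. -/
abbrev Circle1 : Type := AddCircle (1 : ℝ)

/-- The multiplication-by-`d` map `m_d` on the circle. -/
def md (d : ℕ) : Circle1 → Circle1 := fun t => d • t

/-- `G : ℝ → ℝ` (monotone, commuting with `x ↦ x + 1`) is a lift of the circle map `g`. -/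
def IsLift (g : Circle1 → Circle1) (G : CircleDeg1Lift) : Prop :=
  ∀ x : ℝ, g ((x : ℝ) : Circle1) = ((G x : ℝ) : Circle1)

/-- `g` is a monotone degree-one circle map. -/
def IsMonotoneDeg1 (g : Circle1 → Circle1) : Prop :=
  ∃ G : CircleDeg1Lift, IsLift g G

/-- `ρ` is the rotation number of the monotone degree-one circle map `g`:
the residue class mod `ℤ` of the translation number of a lift of `g`. -/
def HasRotationNumber (g : Circle1 → Circle1) (ρ : Circle1) : Prop :=
  ∃ G : CircleDeg1Lift, IsLift g G ∧ ρ = ((G.translationNumber : ℝ) : Circle1)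

/-- `X` is a rotation set for `m_d`. -/
def IsRotationSet (d : ℕ) (X : Set Circle1) : Prop :=
  X.Nonempty ∧ IsCompact X ∧ md d '' X = X ∧
    ∃ g : Circle1 → Circle1, IsMonotoneDeg1 g ∧ ∀ t ∈ X, g t = md d t

/-- `X` is a rotation set for `m_d` with rotation number `ρ`. -/
def IsRotationSetWith (d : ℕ) (X : Set Circle1) (ρ : Circle1) : Prop :=
  X.Nonempty ∧ IsCompact X ∧ md d '' X = X ∧
    ∃ g : Circle1 → Circle1, (∀ t ∈ X, g t = md d t) ∧ HasRotationNumber g ρ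

/-- A gap of `X` is a connected component of the complement of `X`. -/
def IsGap (X : Set Circle1) (I : Set Circle1) : Prop :=
  ∃ t ∈ Xᶜ, I = connectedComponentIn Xᶜ t

/-- `C` is a periodic orbit (cycle) of `m_d`. -/
def IsPeriodicOrbit (d : ℕ) (C : Set Circle1) : Prop :=
  ∃ (t : Circle1) (n : ℕ), 0 < n ∧ (md d)^[n] t = t ∧
    C = Set.range (fun k : Fin n => (md d)^[(k : ℕ)] t)

/-- The number of points of `X` whose representative in `[0,1)` lies in `[0,1/2)`. -/
def s1 (X : Set Circle1) : ℕ :=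
  {t ∈ X | ((AddCircle.equivIco 1 0 t : ℝ) < 1 / 2)}.ncard


/-- An open arc of length `ℓ` in the circle: the image of an open interval of length `ℓ`. -/
def IsOpenArc (ℓ : ℝ) (A : Set Circle1) : Prop :=
  ∃ a : ℝ, A = (fun x : ℝ => ((x : ℝ) : Circle1)) '' Set.Ioo a (a + ℓ)

private lemma lat_ineq (x y c e : ℝ) (hxy : x ≤ y) (hce : c ≤ e) :
    max c (min y e) - max c (min x e) ≤ max x (min y e) - max x (min y c) := by
  rcases le_total x c with h1 | h1 <;> rcases le_total y c with h2 | h2 <;>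
    rcases le_total x e with h3 | h3 <;> rcases le_total y e with h4 | h4 <;>
    simp [min_def, max_def] <;> split_ifs <;> linarith

private lemma clamp_eq (D c z : ℝ) (hD : 0 < D) :
    min 1 (max 0 (D * (z - c))) = D * (max c (min z (c + 1/D)) - c) := by
  have h1 : D * (1/D) = 1 := by field_simp
  have hD' : (0:ℝ) < 1/D := by positivity
  rcases le_total z c with h | h
  · rw [max_eq_left (by nlinarith), min_eq_right (by norm_num),
      min_eq_left (by linarith),
      max_eq_left h]
    ring
  · rcases le_total z (c + 1/D) with h2 | h2
    · rw [max_eq_right (by nlinarith), min_eq_left h2, max_eq_right h,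
        min_eq_right (by nlinarith)]
    · rw [min_eq_right h2, max_eq_right (by nlinarith), min_eq_left (by nlinarith),
        max_eq_right (by nlinarith)]
      nlinarith

private lemma clamp_step (D x y c : ℝ) (hD : 0 < D) (hxy : x ≤ y) :
    min 1 (max 0 (D * (y - c))) - min 1 (max 0 (D * (x - c))) ≤
      D * (max x (min y (c + 1/D)) - max x (min y c)) := by
  have hD' : (0:ℝ) < 1/D := by positivity
  rw [clamp_eq D c y hD, clamp_eq D c x hD]
  have := lat_ineq x y c (c + 1/D) hxy (by linarith)
  nlinarith

private lemma clampSum (D : ℝ) (hD : 0 < D) (m : ℕ) (β : ℕ → ℝ)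
    (hsep : ∀ i, i + 1 < m → β i + 1/D ≤ β (i+1)) (x y : ℝ) (hxy : x ≤ y) :
    ∑ i ∈ Finset.range m,
        (min 1 (max 0 (D * (y - β i))) - min 1 (max 0 (D * (x - β i)))) ≤ D * (y - x) := by
  set bb : ℕ → ℝ := fun j => if j = 0 then x else β (j-1) + 1/D with hbb
  have main : ∀ j, j ≤ m → ∑ i ∈ Finset.range j,
      (min 1 (max 0 (D * (y - β i))) - min 1 (max 0 (D * (x - β i)))) ≤
      D * (max x (min y (bb j)) - x) := by
    intro j
    induction j with
    | zero =>
      intro _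
      simp [hbb, min_eq_right hxy]
    | succ j ih =>
      intro hjm
      have hjm' : j ≤ m := le_of_lt (Nat.lt_of_succ_le hjm)
      have IH := ih hjm'
      rw [Finset.sum_range_succ]
      have hstep := clamp_step D x y (β j) hD hxy
      have hkey : max x (min y (bb j)) ≤ max x (min y (β j)) := by
        rcases Nat.eq_zero_or_pos j with hj0 | hj0
        · subst hj0
          simp [hbb, min_eq_right hxy, le_max_left, le_max_iff, le_min_iff]
        · have hble : bb j ≤ β j := by
            have : (j - 1) + 1 = j := Nat.succ_pred_eq_of_pos hj0
            have hs := hsep (j-1) (by omega)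
            rw [this] at hs
            simp only [hbb, if_neg (Nat.pos_iff_ne_zero.mp hj0)]
            exact hs
          exact max_le_max le_rfl (min_le_min le_rfl hble)
      have hbbsucc : bb (j+1) = β j + 1/D := by simp [hbb]
      rw [hbbsucc]
      nlinarith [hstep, IH, hkey]
  have hfin := main m le_rfl
  have : max x (min y (bb m)) ≤ y := max_le hxy (min_le_left _ _)
  nlinarith


private lemma coe_eq_imp (x y : ℝ) (h : (x : Circle1) = (y : Circle1)) :
    ∃ n : ℤ, y = x + n := by
  rw [QuotientAddGroup.eq_iff_sub_mem] at h
  obtain ⟨n, hn⟩ := AddSubgroup.mem_zmultiples_iff.mp h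
  rw [zsmul_eq_mul, mul_one] at hn
  exact ⟨-n, by push_cast; linarith⟩

private lemma coe_add_int (x : ℝ) (n : ℤ) : ((x + n : ℝ) : Circle1) = (x : Circle1) := by
  simp

private lemma coe_nsmul' (x : ℝ) (n : ℕ) : ((n • x : ℝ) : Circle1) = n • (x : Circle1) :=
  (QuotientAddGroup.mk' _).map_nsmul n x

private lemma backward_ext (d : ℕ) (hd : 2 ≤ d) (X : Set Circle1) (hX : X.Nonempty)
    (A : Fin (d - 1) → Set Circle1)
    (hA : ∀ i, IsOpenArc (1 / (d : ℝ)) (A i) ∧ A i ⊆ Xᶜ)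
    (hdisj : ∀ i j, i ≠ j → Disjoint (A i) (A j)) :
    ∃ g : Circle1 → Circle1, IsMonotoneDeg1 g ∧ ∀ t ∈ X, g t = md d t := by
  classical
  obtain ⟨t₀, ht₀⟩ := hX
  have hd0 : (0:ℝ) < d := by positivity
  have hd1 : (0:ℝ) < 1/(d:ℝ) := by positivity
  set p : ℝ := (AddCircle.equivIco 1 0 t₀ : ℝ) with hp
  have hpX : ((p : ℝ) : Circle1) ∈ X := by
    have : ((p : ℝ) : Circle1) = t₀ := (AddCircle.equivIco 1 0).symm_apply_apply t₀
    rw [this]; exact ht₀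
  choose a ha using fun i => (hA i).1
  set α : Fin (d-1) → ℝ := fun i => p + Int.fract (a i - p) with hα
  have hαval : ∀ i, α i = a i - ⌊a i - p⌋ := by
    intro i; simp only [hα, Int.fract]; ring
  have hαmem : ∀ (i : Fin (d-1)) (x : ℝ), x ∈ Ioo (α i) (α i + 1/(d:ℝ)) →
      ((x:ℝ):Circle1) ∈ A i := by
    intro i x hx
    rw [ha i]
    refine ⟨x + ⌊a i - p⌋, ⟨?_, ?_⟩, ?_⟩
    · have := hx.1; rw [hαval i] at this; linarith
    · have := hx.2; rw [hαval i] at this; linarith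
    · exact coe_add_int x _
  have hαp : ∀ i, p ≤ α i := by
    intro i; simp only [hα]; linarith [Int.fract_nonneg (a i - p)]
  have hαlt : ∀ i, α i < p + 1 := by
    intro i; simp only [hα]; linarith [Int.fract_lt_one (a i - p)]
  have hαX : ∀ (i : Fin (d-1)) (x : ℝ), x ∈ Ioo (α i) (α i + 1/(d:ℝ)) →
      ((x:ℝ):Circle1) ∉ X := fun i x hx => (hA i).2 (hαmem i x hx)
  have hαtop : ∀ i, α i + 1/(d:ℝ) ≤ p + 1 := by
    intro i
    by_contra hcon
    push_neg at hcon
    refine hαX i (p+1) ⟨hαlt i, by linarith⟩ ?_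
    have : ((p + 1 : ℝ) : Circle1) = ((p : ℝ) : Circle1) := by
      have := coe_add_int p 1; push_cast at this; exact this
    rw [this]; exact hpX
  have hIdisj : ∀ i j : Fin (d-1), i ≠ j →
      ∀ x : ℝ, x ∈ Ioo (α i) (α i + 1/(d:ℝ)) → x ∉ Ioo (α j) (α j + 1/(d:ℝ)) := by
    intro i j hij x hxi hxj
    exact Set.disjoint_left.mp (hdisj i j hij) (hαmem i x hxi) (hαmem j x hxj)
  -- sort the arcs
  obtain ⟨β, hβmono, hβp', hβtop', hβX', hβdisj⟩ :
      ∃ β : Fin (d-1) → ℝ, Monotone β ∧ (∀ i, p ≤ β i) ∧ (∀ i, β i + 1/(d:ℝ) ≤ p+1) ∧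
        (∀ i, ∀ x ∈ Ioo (β i) (β i + 1/(d:ℝ)), ((x:ℝ):Circle1) ∉ X) ∧
        (∀ i j : Fin (d-1), i ≠ j → ∀ x ∈ Ioo (β i) (β i + 1/(d:ℝ)),
          x ∉ Ioo (β j) (β j + 1/(d:ℝ))) :=
    ⟨α ∘ Tuple.sort α, Tuple.monotone_sort α, fun i => hαp _, fun i => hαtop _,
      fun i x hx => hαX _ x hx,
      fun i j hij x hxi hxj =>
        hIdisj _ _ (fun h => hij ((Tuple.sort α).injective h)) x hxi hxj⟩
  have hβsep : ∀ i j : Fin (d-1), i < j → β i + 1/(d:ℝ) ≤ β j := by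
    intro i j hij
    by_contra hcon
    push_neg at hcon
    have hle : β i ≤ β j := hβmono hij.le
    exact hβdisj i j (Fin.ne_of_lt hij) ((β j + (β i + 1/(d:ℝ)))/2)
      ⟨by linarith, by linarith⟩ ⟨by linarith, by linarith⟩
  -- pass to ℕ-indexed family
  have hm2 : d - 2 < d - 1 := by omega
  set B : ℕ → ℝ := fun n => β ⟨min n (d-2), lt_of_le_of_lt (min_le_right _ _) hm2⟩ with hB
  have hBeq : ∀ (n : ℕ) (h : n < d - 1), B n = β ⟨n, h⟩ := by
    intro n h
    simp only [hB]
    congr 1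
    exact Fin.ext (by simp; omega)
  have hBsep : ∀ n, n + 1 < d - 1 → B n + 1/(d:ℝ) ≤ B (n+1) := by
    intro n h
    rw [hBeq n (by omega), hBeq (n+1) h]
    exact hβsep _ _ (Fin.mk_lt_mk.mpr (by omega))
  have hBp : ∀ n, p ≤ B n := fun n => hβp' _
  have hBtop : ∀ n, B n + 1/(d:ℝ) ≤ p + 1 := fun n => hβtop' _
  have hBX : ∀ (n : ℕ), n < d - 1 → ∀ x : ℝ, x ∈ Ioo (B n) (B n + 1/(d:ℝ)) →
      ((x:ℝ):Circle1) ∉ X := by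
    intro n hn x hx
    rw [hBeq n hn] at hx
    exact hβX' _ x hx
  -- the lift
  set cl : ℕ → ℝ → ℝ := fun n z => min 1 (max 0 ((d:ℝ) * (z - B n))) with hcl
  set η : ℝ → ℝ := fun t => (d:ℝ) * t - ∑ n ∈ Finset.range (d-1), cl n (p + t) with hη
  have hηmono : Monotone η := by
    intro s t hst
    have hsum := clampSum (d:ℝ) hd0 (d-1) B hBsep (p+s) (p+t) (by linarith)
    have hsplit : ∑ n ∈ Finset.range (d-1),
        (min 1 (max 0 ((d:ℝ) * (p + t - B n))) - min 1 (max 0 ((d:ℝ) * (p + s - B n)))) =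
        (∑ n ∈ Finset.range (d-1), cl n (p + t)) - ∑ n ∈ Finset.range (d-1), cl n (p + s) := by
      rw [Finset.sum_sub_distrib]
    rw [hsplit] at hsum
    simp only [hη]
    have : (d:ℝ) * (p + t - (p + s)) = (d:ℝ)*t - (d:ℝ)*s := by ring
    rw [this] at hsum
    linarith
  have hη0 : η 0 = 0 := by
    simp only [hη, mul_zero, add_zero]
    rw [Finset.sum_eq_zero, sub_zero]
    intro n hn
    simp only [hcl]
    rw [max_eq_left (by nlinarith [hBp n]), min_eq_right (by norm_num)]
  have hη1 : η 1 = 1 := by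
    simp only [hη, mul_one]
    have : ∑ n ∈ Finset.range (d-1), cl n (p + 1) = (d-1 : ℕ) := by
      rw [Finset.sum_congr rfl (g := fun _ => (1:ℝ)) ?_]
      · simp
      · intro n _
        simp only [hcl]
        have h1 : (1:ℝ) ≤ (d:ℝ) * (p + 1 - B n) := by
          have := hBtop n
          have h2 : 1/(d:ℝ) ≤ p + 1 - B n := by linarith
          calc (1:ℝ) = (d:ℝ) * (1/(d:ℝ)) := by field_simp
          _ ≤ (d:ℝ) * (p + 1 - B n) := by nlinarith
        rw [max_eq_right (by linarith), min_eq_left h1]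
    rw [this]
    have : ((d-1:ℕ):ℝ) = (d:ℝ) - 1 := by
      have : 1 ≤ d := by omega
      push_cast [Nat.cast_sub this]
      ring
    rw [this]; ring
  set F : ℝ → ℝ := fun x => (d:ℝ)*p + ⌊x - p⌋ + η (Int.fract (x - p)) with hF
  have hFmono : Monotone F := by
    intro x y hxy
    have hfl : ⌊x - p⌋ ≤ ⌊y - p⌋ := Int.floor_mono (by linarith)
    rcases eq_or_lt_of_le hfl with heq | hlt
    · have hfr : Int.fract (x-p) ≤ Int.fract (y-p) := by
        simp only [Int.fract]
        rw [← heq]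
        have : (⌊x-p⌋:ℝ) = (⌊x-p⌋:ℝ) := rfl
        linarith
      have := hηmono hfr
      simp only [hF]
      rw [heq]
      linarith
    · have h1 : η (Int.fract (x-p)) ≤ 1 := by
        rw [← hη1]; exact hηmono (le_of_lt (Int.fract_lt_one _))
      have h2 : 0 ≤ η (Int.fract (y-p)) := by
        rw [← hη0]; exact hηmono (Int.fract_nonneg _)
      have h3 : (⌊x-p⌋:ℝ) + 1 ≤ (⌊y-p⌋:ℝ) := by exact_mod_cast Int.add_one_le_iff.mpr hlt
      simp only [hF]
      linarith
  have hFadd : ∀ x, F (x + 1) = F x + 1 := by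
    intro x
    simp only [hF]
    have h1 : x + 1 - p = (x - p) + 1 := by ring
    rw [h1, Int.fract_add_one, Int.floor_add_one]
    push_cast
    ring
  set G : CircleDeg1Lift := ⟨⟨F, hFmono⟩, hFadd⟩ with hG
  have hGcoe : ∀ x, G x = F x := fun _ => rfl
  set g : Circle1 → Circle1 :=
    fun t => ((F ((AddCircle.equivIco 1 0 t : ℝ)) : ℝ) : Circle1) with hg
  have hFint : ∀ (x : ℝ) (n : ℤ), F (x + n) = F x + n := by
    intro x n
    have h1 : x + (n:ℝ) = (n:ℝ) + x := by ring
    have h2 := G.map_int_add n x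
    rw [hGcoe, hGcoe] at h2
    rw [h1, h2]; ring
  have hrkey : ∀ (x r : ℝ), ((r:ℝ):Circle1) = ((x:ℝ):Circle1) →
      ((F r : ℝ) : Circle1) = ((F x : ℝ) : Circle1) := by
    intro x r hrx
    obtain ⟨n, hn⟩ := coe_eq_imp _ _ hrx
    rw [hn, hFint]
    exact (coe_add_int (F r) n).symm
  refine ⟨g, ⟨G, ?_⟩, ?_⟩
  · -- IsLift
    intro x
    rw [hGcoe]
    exact hrkey x _ ((AddCircle.equivIco 1 0).symm_apply_apply _)
  · -- extends m_d on X
    intro t ht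
    set r : ℝ := (AddCircle.equivIco 1 0 t : ℝ) with hr
    have hrt : ((r:ℝ):Circle1) = t := (AddCircle.equivIco 1 0).symm_apply_apply t
    have hmd : md d t = ((d * r : ℝ) : Circle1) := by
      rw [← hrt]
      show d • ((r:ℝ):Circle1) = ((d * r : ℝ) : Circle1)
      have h1 : (d * r : ℝ) = (d • r : ℝ) := (nsmul_eq_mul d r).symm
      rw [h1, coe_nsmul']
    set s : ℝ := Int.fract (r - p) with hs
    set z : ℝ := p + s with hz
    have hzr : z = r - ⌊r - p⌋ := by
      simp only [hz, hs, Int.fract]; ring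
    have hzX : ((z:ℝ):Circle1) ∈ X := by
      have h1 : ((z:ℝ):Circle1) = ((r:ℝ):Circle1) := by
        have h3 : z + ((⌊r - p⌋ : ℤ) : ℝ) = r := by rw [hzr]; ring
        calc ((z:ℝ):Circle1) = ((z + ((⌊r-p⌋:ℤ):ℝ) : ℝ) : Circle1) := (coe_add_int z _).symm
        _ = ((r:ℝ):Circle1) := by rw [h3]
      rw [h1, hrt]; exact ht
    have hclK : ∀ n ∈ Finset.range (d-1),
        cl n z = (((if z ≤ B n then 0 else 1 : ℤ)) : ℝ) := by
      intro n hn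
      have hnot : z ∉ Ioo (B n) (B n + 1/(d:ℝ)) := fun hmem => hBX n (Finset.mem_range.mp hn) z hmem hzX
      by_cases hle : z ≤ B n
      · simp only [hcl, if_pos hle]
        rw [max_eq_left (by nlinarith), min_eq_right (by norm_num)]
        norm_num
      · push_neg at hle
        have h2 : B n + 1/(d:ℝ) ≤ z := by
          by_contra hcon
          push_neg at hcon
          exact hnot ⟨hle, hcon⟩
        simp only [if_neg (not_le.mpr hle)]
        have h1 : (1:ℝ) ≤ (d:ℝ) * (z - B n) := by
          have h3 : 1/(d:ℝ) ≤ z - B n := by linarith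
          calc (1:ℝ) = (d:ℝ) * (1/(d:ℝ)) := by field_simp
          _ ≤ (d:ℝ) * (z - B n) := by nlinarith
        simp only [hcl]
        rw [max_eq_right (by linarith), min_eq_left h1]
        norm_num
    set K : ℤ := ∑ n ∈ Finset.range (d-1), (if z ≤ B n then 0 else 1 : ℤ) with hK
    have hsumK : ∑ n ∈ Finset.range (d-1), cl n z = (K:ℝ) := by
      rw [Finset.sum_congr rfl hclK, hK]
      push_cast
      rfl
    set m : ℤ := ⌊r - p⌋ - (d:ℤ) * ⌊r - p⌋ - K with hm
    have hFr : F r = d * r + (m:ℝ) := by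
      have hηs : η s = (d:ℝ) * s - (K:ℝ) := by
        simp only [hη]
        rw [← hz, hsumK]
      simp only [hF, ← hs]
      rw [hηs]
      have hsval : s = r - p - ⌊r - p⌋ := by simp only [hs, Int.fract]
      rw [hsval]
      simp only [hm]
      push_cast
      ring
    show ((F r : ℝ) : Circle1) = md d t
    rw [hmd, hFr]
    exact coe_add_int _ m


private lemma forward_arcs (d : ℕ) (hd : 2 ≤ d) (X : Set Circle1) (hXc : IsCompact X)
    (g : Circle1 → Circle1) (G : CircleDeg1Lift) (hlift : IsLift g G)
    (hg : ∀ t ∈ X, g t = md d t) (x₀ : ℝ) (hx₀ : ((x₀ : ℝ) : Circle1) ∈ X) :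
    ∃ A : Fin (d - 1) → Set Circle1,
      (∀ i, IsOpenArc (1 / (d : ℝ)) (A i) ∧ A i ⊆ Xᶜ) ∧
      (∀ i j, i ≠ j → Disjoint (A i) (A j)) := by
  classical
  have hd0 : (0:ℝ) < d := by positivity
  have hdiv : ∀ u v : ℝ, u ≤ v → u/(d:ℝ) ≤ v/(d:ℝ) := by
    intro u v h
    gcongr
  set Xt : Set ℝ := (fun x : ℝ => ((x:ℝ):Circle1)) ⁻¹' X with hXtdef
  have hXtcl : IsClosed Xt := IsClosed.preimage (AddCircle.continuous_mk' 1) hXc.isClosed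
  have hx₀t : x₀ ∈ Xt := hx₀
  have hGint : ∀ x ∈ Xt, ∃ n : ℤ, G x = d * x + n := by
    intro x hx
    have h1 : ((G x : ℝ) : Circle1) = ((d * x : ℝ) : Circle1) := by
      rw [← hlift x, hg _ hx]
      show d • ((x:ℝ):Circle1) = ((d * x : ℝ) : Circle1)
      have h2 : (d * x : ℝ) = (d • x : ℝ) := (nsmul_eq_mul d x).symm
      rw [h2, coe_nsmul']
    obtain ⟨n, hn⟩ := coe_eq_imp _ _ h1
    exact ⟨-n, by push_cast; linarith⟩
  obtain ⟨nc, hnc⟩ := hGint x₀ hx₀t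
  set T : ℕ → Set ℝ := fun j =>
    {x | x ∈ Xt ∧ x₀ ≤ x ∧ x ≤ x₀ + 1 ∧ (nc:ℝ) - j + 1 ≤ G x - d * x} with hTdef
  set b : ℕ → ℝ := fun j => sSup (T j) with hbdef
  have hx₀T : ∀ j : ℕ, 1 ≤ j → x₀ ∈ T j := by
    intro j hj
    refine ⟨hx₀t, le_refl _, by linarith, ?_⟩
    rw [hnc]
    have h1 : (1:ℝ) ≤ (j:ℝ) := by exact_mod_cast hj
    linarith
  have hTbdd : ∀ j : ℕ, BddAbove (T j) := fun j => ⟨x₀ + 1, fun x hx => hx.2.2.1⟩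
  have hTne : ∀ j : ℕ, 1 ≤ j → (T j).Nonempty := fun j hj => ⟨x₀, hx₀T j hj⟩
  have hbmem : ∀ j : ℕ, 1 ≤ j → b j ∈ Xt ∧ x₀ ≤ b j ∧ b j ≤ x₀ + 1 := by
    intro j hj
    have h1 : b j ∈ closure (T j) := csSup_mem_closure (hTne j hj) (hTbdd j)
    have h2 : closure (T j) ⊆ Xt ∩ Icc x₀ (x₀+1) :=
      closure_minimal (fun x hx => ⟨hx.1, hx.2.1, hx.2.2.1⟩) (hXtcl.inter isClosed_Icc)
    obtain ⟨ha1, ha2, ha3⟩ := h2 h1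
    exact ⟨ha1, ha2, ha3⟩
  have hx₀b : ∀ j : ℕ, 1 ≤ j → x₀ ≤ b j := fun j hj => le_csSup (hTbdd j) (hx₀T j hj)
  have hGadd : G (x₀ + 1) = G x₀ + 1 := G.map_add_one x₀
  have hmem_ub : ∀ (j : ℕ) (x : ℝ), x ∈ T j → x ≤ x₀ + (j:ℝ)/d := by
    intro j x hx
    have h1 : G x ≤ G (x₀+1) := G.mono hx.2.2.1
    rw [hGadd, hnc] at h1
    have h2 := hx.2.2.2
    have h4 : (d:ℝ) * x ≤ (d:ℝ) * (x₀ + (j:ℝ)/d) := by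
      have h5 : (d:ℝ) * (x₀ + (j:ℝ)/d) = (d:ℝ) * x₀ + (j:ℝ) := by
        field_simp
      rw [h5]
      linarith
    exact (mul_le_mul_iff_right₀ hd0).mp h4
  have hble : ∀ j : ℕ, 1 ≤ j → b j ≤ x₀ + (j:ℝ)/d := fun j hj =>
    csSup_le (hTne j hj) (hmem_ub j)
  have hbmono : ∀ i j : ℕ, 1 ≤ i → i ≤ j → b i ≤ b j := by
    intro i j hi hij
    apply csSup_le_csSup (hTbdd j) (hTne i hi)
    intro x hx
    refine ⟨hx.1, hx.2.1, hx.2.2.1, ?_⟩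
    have h1 := hx.2.2.2
    have hij' : (i:ℝ) ≤ (j:ℝ) := by exact_mod_cast hij
    linarith
  have hkey : ∀ (i j : ℕ) (x : ℝ), 1 ≤ i → i ≤ j → b i = b j → x ∈ Xt → b j < x →
      x ≤ x₀ + 1 → b j + ((j:ℝ) - (i:ℝ) + 1)/d ≤ x := by
    intro i j x hi hij hbe hxX hbx hxle
    have hx₀bj : x₀ ≤ b j := hbe ▸ hx₀b i hi
    have hxnot : x ∉ T j := fun hmem => absurd (le_csSup (hTbdd j) hmem) (not_le.mpr hbx)
    have hklt : G x - d * x < (nc:ℝ) - j + 1 := by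
      by_contra hcon
      push_neg at hcon
      exact hxnot ⟨hxX, by linarith, hxle, hcon⟩
    obtain ⟨nx, hnx⟩ := hGint x hxX
    have hkle : G x - d * x ≤ (nc:ℝ) - j := by
      have h1 : (nx:ℝ) < (nc:ℝ) - (j:ℝ) + 1 := by rw [hnx] at hklt; linarith
      have h2 : (nx:ℤ) < nc - (j:ℤ) + 1 := by exact_mod_cast h1
      have h3 : (nx:ℤ) ≤ nc - (j:ℤ) := by omega
      have h4 : (nx:ℝ) ≤ (nc:ℝ) - (j:ℝ) := by exact_mod_cast h3
      rw [hnx]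
      linarith
    have hub : ∀ y ∈ T i, y ≤ x - ((j:ℝ) - (i:ℝ) + 1)/d := by
      intro y hy
      have hybi : y ≤ b i := le_csSup (hTbdd i) hy
      have hyx : y ≤ x := by rw [hbe] at hybi; linarith
      have h1 : G y ≤ G x := G.mono hyx
      have h2 := hy.2.2.2
      have h4 : (d:ℝ) * y ≤ (d:ℝ) * (x - ((j:ℝ) - (i:ℝ) + 1)/d) := by
        have h5 : (d:ℝ) * (x - ((j:ℝ) - (i:ℝ) + 1)/d) = (d:ℝ) * x - ((j:ℝ) - (i:ℝ) + 1) := by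
          field_simp
        rw [h5]
        linarith
      exact (mul_le_mul_iff_right₀ hd0).mp h4
    have h5 : b i ≤ x - ((j:ℝ) - (i:ℝ) + 1)/d := csSup_le (hTne i hi) hub
    rw [hbe] at h5
    linarith
  set S : ℕ → Set ℕ := fun j => {i | 1 ≤ i ∧ b i = b j} with hSdef
  set j0 : ℕ → ℕ := fun j => sInf (S j) with hj0def
  have hj0mem : ∀ j : ℕ, 1 ≤ j → (1 ≤ j0 j ∧ b (j0 j) = b j) ∧ j0 j ≤ j := by
    intro j hj
    have hne : (S j).Nonempty := ⟨j, hj, rfl⟩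
    exact ⟨Nat.sInf_mem hne, Nat.sInf_le ⟨hj, rfl⟩⟩
  set av : ℕ → ℝ := fun j => b j + ((j:ℝ) - (j0 j : ℝ))/d with havdef
  have hgap : ∀ j : ℕ, 1 ≤ j → j ≤ d - 1 → ∀ x ∈ Xt, x ∉ Ioo (av j) (av j + 1/(d:ℝ)) := by
    intro j hj1 hj2 x hx hmem
    obtain ⟨⟨hj01, hj0b⟩, hj0le⟩ := hj0mem j hj1
    have hbj : b j ≤ x₀ + (j0 j : ℝ)/d := hj0b ▸ hble (j0 j) hj01
    have hj0r : (j0 j : ℝ) ≤ (j:ℝ) := by exact_mod_cast hj0le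
    have hx1 := hmem.1
    have hx2 := hmem.2
    simp only [havdef] at hx1 hx2
    have h1 : x < b j + ((j:ℝ) - (j0 j:ℝ) + 1)/d := by
      have hr : ((j:ℝ) - (j0 j:ℝ))/d + 1/d = ((j:ℝ) - (j0 j:ℝ) + 1)/d := by ring
      linarith
    have hxle : x ≤ x₀ + 1 := by
      have h2 : ((j:ℝ) - (j0 j:ℝ) + 1)/d + (j0 j:ℝ)/d = ((j:ℝ)+1)/d := by ring
      have h3 : ((j:ℝ)+1)/d ≤ 1 := by
        rw [div_le_one hd0]
        have h6 : j + 1 ≤ d := by omega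
        exact_mod_cast h6
      linarith
    have hbx : b j < x := by
      have h0 : 0 ≤ ((j:ℝ) - (j0 j:ℝ))/d := div_nonneg (by linarith) hd0.le
      linarith
    have hcontra := hkey (j0 j) j x hj01 hj0le hj0b hx hbx hxle
    linarith
  have hsep : ∀ i j : ℕ, 1 ≤ i → i < j → j ≤ d - 1 → av i + 1/(d:ℝ) ≤ av j := by
    intro i j hi hij hjd
    have hj1 : 1 ≤ j := by omega
    obtain ⟨⟨hi01, hi0b⟩, hi0le⟩ := hj0mem i hi
    obtain ⟨⟨hj01, hj0b⟩, hj0le⟩ := hj0mem j hj1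
    by_cases hbe : b i = b j
    · have hj0eq : j0 i = j0 j := by
        have hSeq : S i = S j := by
          ext k
          simp only [hSdef, Set.mem_setOf_eq, hbe]
        simp only [hj0def, hSeq]
      have hij' : (i:ℝ) + 1 ≤ (j:ℝ) := by exact_mod_cast hij
      have h1 : ((i:ℝ) - (j0 i:ℝ))/d + 1/d = ((i:ℝ) - (j0 i:ℝ) + 1)/d := by ring
      have h2 : ((i:ℝ) - (j0 i:ℝ) + 1)/d ≤ ((j:ℝ) - (j0 i:ℝ))/d := hdiv _ _ (by linarith)
      simp only [havdef]
      rw [← hbe, ← hj0eq]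
      linarith
    · have hblt : b i < b j := lt_of_le_of_ne (hbmono i j hi hij.le) hbe
      have hbjXt : b j ∈ Xt := (hbmem j hj1).1
      have hbjle : b j ≤ x₀ + 1 := (hbmem j hj1).2.2
      have h1 := hkey (j0 i) i (b j) hi01 hi0le hi0b hbjXt hblt hbjle
      have hj0r : (j0 j : ℝ) ≤ (j:ℝ) := by exact_mod_cast hj0le
      have h2 : 0 ≤ ((j:ℝ) - (j0 j:ℝ))/d := div_nonneg (by linarith) hd0.le
      have h3 : ((i:ℝ) - (j0 i:ℝ))/d + 1/d = ((i:ℝ) - (j0 i:ℝ) + 1)/d := by ring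
      simp only [havdef]
      linarith
  have hbound : ∀ j : ℕ, 1 ≤ j → j ≤ d - 1 → x₀ ≤ av j ∧ av j + 1/(d:ℝ) ≤ x₀ + 1 := by
    intro j hj1 hj2
    obtain ⟨⟨hj01, hj0b⟩, hj0le⟩ := hj0mem j hj1
    have hj0r : (j0 j : ℝ) ≤ (j:ℝ) := by exact_mod_cast hj0le
    have hbj : b j ≤ x₀ + (j0 j : ℝ)/d := hj0b ▸ hble (j0 j) hj01
    constructor
    · have h0 : 0 ≤ ((j:ℝ) - (j0 j:ℝ))/d := div_nonneg (by linarith) hd0.le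
      have h1 := hx₀b j hj1
      simp only [havdef]
      linarith
    · simp only [havdef]
      have h1 : ((j:ℝ) - (j0 j:ℝ))/d + 1/d + (j0 j:ℝ)/d = ((j:ℝ)+1)/d := by ring
      have h3 : ((j:ℝ)+1)/d ≤ 1 := by
        rw [div_le_one hd0]
        have h6 : j + 1 ≤ d := by omega
        exact_mod_cast h6
      linarith
  refine ⟨fun i => (fun x : ℝ => ((x:ℝ):Circle1)) '' Ioo (av ((i:ℕ)+1)) (av ((i:ℕ)+1) + 1/(d:ℝ)),
    ?_, ?_⟩
  · intro i
    have hilt := i.isLt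
    have hi2 : (i:ℕ)+1 ≤ d - 1 := by omega
    refine ⟨⟨av ((i:ℕ)+1), rfl⟩, ?_⟩
    rintro t ⟨x, hx, rfl⟩ htX
    exact hgap _ (by omega) hi2 x htX hx
  · have main : ∀ i j : Fin (d-1), (i:ℕ) < (j:ℕ) →
        Disjoint ((fun x:ℝ => ((x:ℝ):Circle1)) '' Ioo (av ((i:ℕ)+1)) (av ((i:ℕ)+1)+1/(d:ℝ)))
          ((fun x:ℝ => ((x:ℝ):Circle1)) '' Ioo (av ((j:ℕ)+1)) (av ((j:ℕ)+1)+1/(d:ℝ))) := by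
      intro i j hij
      have hilt := i.isLt
      have hjlt := j.isLt
      rw [Set.disjoint_left]
      rintro t ⟨x, hx, rfl⟩ ⟨y, hy, hyx⟩
      obtain ⟨n, hn⟩ := coe_eq_imp y x hyx
      obtain ⟨hxl, hxr⟩ := hbound ((i:ℕ)+1) (by omega) (by omega)
      obtain ⟨hyl, hyr⟩ := hbound ((j:ℕ)+1) (by omega) (by omega)
      have hx1 : x₀ ≤ x := le_trans hxl hx.1.le
      have hx2 : x < x₀ + 1 := lt_of_lt_of_le hx.2 hxr
      have hy1 : x₀ ≤ y := le_trans hyl hy.1.le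
      have hy2 : y < x₀ + 1 := lt_of_lt_of_le hy.2 hyr
      have hn0 : n = 0 := by
        have h1 : (n:ℝ) < 1 := by linarith
        have h2 : (-1:ℝ) < (n:ℝ) := by linarith
        have h3 : (n:ℤ) < 1 := by exact_mod_cast h1
        have h4 : (-1:ℤ) < n := by exact_mod_cast h2
        omega
      rw [hn0] at hn
      push_cast at hn
      have hsep' := hsep ((i:ℕ)+1) ((j:ℕ)+1) (by omega) (by omega) (by omega)
      have hyy : x = y := by rw [hn]; ring
      have hfin : x < y := by
        calc x < av ((i:ℕ)+1) + 1/(d:ℝ) := hx.2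
        _ ≤ av ((j:ℕ)+1) := hsep'
        _ < y := hy.1
      exact absurd hyy (ne_of_lt hfin)
    intro i j hij
    rcases Nat.lt_or_ge (i:ℕ) (j:ℕ) with h | h
    · exact main i j h
    · have h2 : (j:ℕ) < (i:ℕ) := lt_of_le_of_ne h (fun he => hij (Fin.ext he.symm))
      exact (main j i h2).symm

/-- A nonempty compact `m_d`-invariant set is a rotation set if and only
if its complement contains `d - 1` pairwise disjoint open arcs, each of length `1/d`. -/
theorem rotation_set_iff_disjoint_arcs
    (d : ℕ) (hd : 2 ≤ d) (X : Set Circle1)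
    (hX : X.Nonempty) (hXc : IsCompact X) (hXinv : md d '' X = X) :
    (∃ g : Circle1 → Circle1, IsMonotoneDeg1 g ∧ ∀ t ∈ X, g t = md d t) ↔
      ∃ A : Fin (d - 1) → Set Circle1,
        (∀ i, IsOpenArc (1 / (d : ℝ)) (A i) ∧ A i ⊆ Xᶜ) ∧
        (∀ i j, i ≠ j → Disjoint (A i) (A j)) := by
  constructor
  · rintro ⟨g, ⟨G, hlift⟩, hg⟩
    obtain ⟨t₀, ht₀⟩ := hX
    have hx₀ : (((AddCircle.equivIco 1 0 t₀ : ℝ) : ℝ) : Circle1) ∈ X := by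
      have h : (((AddCircle.equivIco 1 0 t₀ : ℝ) : ℝ) : Circle1) = t₀ :=
        (AddCircle.equivIco 1 0).symm_apply_apply t₀
      rw [h]
      exact ht₀
    exact forward_arcs d hd X hXc g G hlift hg _ hx₀
  · rintro ⟨A, hA, hdisj⟩
    exact backward_ext d hd X hX A hA hdisj
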